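/- arXiv:2506.08631 — 3 statements merged into one kernel-verified Lean document; each statement's English description precedes it below -/
import Mathlib

section
/- Let γ > 0, let W ⊆ ℝ² be a measurable set, let M ≥ 0, and let S, T̃ : W → ℝ be measurable functions with 0 ≤ S(x) ≤ M for almost every x ∈ W and with T̃² integrable on W. Then the function x ↦ S(x)·T̃(x)·r̃(T̃(x)) is integrable on W and ∫_W S(x)·T̃(x)·r̃(T̃(x)) dx ≤ (exp(−1)·M/γ)·∫_W T̃(x)² dx. -/
open MeasureTheory

/-- The shifted Arrhenius reaction-rate function with activation parameter `γ`. -/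
noncomputable def rt (γ s : ℝ) : ℝ := if 0 < s then Real.exp (-γ / s) else 0

lemma rt_key (γ : ℝ) (hγ : 0 < γ) (t : ℝ) :
    0 ≤ t * rt γ t ∧ t * rt γ t ≤ (Real.exp (-1) / γ) * t ^ 2 := by
  unfold rt
  by_cases ht : 0 < t
  · simp only [if_pos ht]
    constructor
    · positivity
    · -- t * exp(-γ/t) ≤ (e⁻¹/γ) t²  ⟺  exp(-γ/t) ≤ e⁻¹ t / γ
      have hu : 0 < γ / t := div_pos hγ ht
      have key : (γ / t) * Real.exp (-(γ / t)) ≤ Real.exp (-1) := by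
        have h1 : γ / t ≤ Real.exp (γ / t - 1) := by
          have := Real.add_one_le_exp (γ / t - 1)
          linarith
        calc (γ / t) * Real.exp (-(γ / t))
            ≤ Real.exp (γ / t - 1) * Real.exp (-(γ / t)) := by
              exact mul_le_mul_of_nonneg_right h1 (Real.exp_nonneg _)
          _ = Real.exp (-1) := by rw [← Real.exp_add]; ring_nf
      have hexp : Real.exp (-γ / t) ≤ Real.exp (-1) * t / γ := by
        rw [neg_div, le_div_iff₀ hγ]
        have key' := mul_le_mul_of_nonneg_right key ht.le
        have heq : γ / t * Real.exp (-(γ / t)) * t = Real.exp (-(γ / t)) * γ := by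
          field_simp
        linarith
      calc t * Real.exp (-γ / t) ≤ t * (Real.exp (-1) * t / γ) :=
            mul_le_mul_of_nonneg_left hexp ht.le
        _ = (Real.exp (-1) / γ) * t ^ 2 := by ring
  · simp only [if_neg ht, mul_zero]
    exact ⟨le_refl 0, by positivity⟩

/-- Reaction-term estimate: if `0 ≤ S ≤ M` a.e. on a measurable set `W ⊆ ℝ²` and `T̃²`
is integrable on `W`, then `S·T̃·r̃(T̃)` is integrable on `W` and
`∫_W S·T̃·r̃(T̃) ≤ (exp(−1)·M/γ)·∫_W T̃²`. -/
theorem stmt2 (γ : ℝ) (hγ : 0 < γ) (W : Set (ℝ × ℝ)) (hW : MeasurableSet W)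
    (M : ℝ) (hM : 0 ≤ M) (S Ttil : ℝ × ℝ → ℝ)
    (hSmeas : Measurable S) (hTmeas : Measurable Ttil)
    (hS : ∀ᵐ x ∂(volume.restrict W), 0 ≤ S x ∧ S x ≤ M)
    (hT2 : IntegrableOn (fun x => (Ttil x) ^ 2) W volume) :
    IntegrableOn (fun x => S x * Ttil x * rt γ (Ttil x)) W volume ∧
    ∫ x in W, S x * Ttil x * rt γ (Ttil x) ≤
      (Real.exp (-1) * M / γ) * ∫ x in W, (Ttil x) ^ 2 := by
  have hrt_meas : Measurable (fun x => rt γ (Ttil x)) := by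
    have : Measurable (fun s : ℝ => rt γ s) := by
      unfold rt
      apply Measurable.ite (measurableSet_lt measurable_const measurable_id)
      · exact (Real.measurable_exp.comp ((measurable_const).div measurable_id))
      · exact measurable_const
    exact this.comp hTmeas
  have hfmeas : Measurable (fun x => S x * Ttil x * rt γ (Ttil x)) :=
    (hSmeas.mul hTmeas).mul hrt_meas
  have hbound : ∀ᵐ x ∂(volume.restrict W),
      ‖S x * Ttil x * rt γ (Ttil x)‖ ≤ (Real.exp (-1) * M / γ) * (Ttil x) ^ 2 := by
    filter_upwards [hS] with x ⟨hS0, hSM⟩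
    have hk := rt_key γ hγ (Ttil x)
    have h0 : 0 ≤ S x * Ttil x * rt γ (Ttil x) := by
      rw [mul_assoc]; exact mul_nonneg hS0 hk.1
    rw [Real.norm_eq_abs, abs_of_nonneg h0, mul_assoc]
    calc S x * (Ttil x * rt γ (Ttil x)) ≤ M * ((Real.exp (-1) / γ) * (Ttil x) ^ 2) := by
          apply mul_le_mul hSM hk.2 hk.1 hM
      _ = (Real.exp (-1) * M / γ) * (Ttil x) ^ 2 := by ring
  have hint : IntegrableOn (fun x => S x * Ttil x * rt γ (Ttil x)) W volume := by
    apply Integrable.mono' (hT2.const_mul (Real.exp (-1) * M / γ))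
      hfmeas.aestronglyMeasurable hbound
  refine ⟨hint, ?_⟩
  calc ∫ x in W, S x * Ttil x * rt γ (Ttil x)
      ≤ ∫ x in W, (Real.exp (-1) * M / γ) * (Ttil x) ^ 2 := by
        apply integral_mono_ae hint (hT2.const_mul _)
        filter_upwards [hbound] with x hx
        exact (le_abs_self _).trans (le_of_eq (Real.norm_eq_abs _).symm) |>.trans hx
    _ = (Real.exp (-1) * M / γ) * ∫ x in W, (Ttil x) ^ 2 := integral_const_mul _ _
end

section
/- Let u : ℝ² → ℝ be twice continuously differentiable on an open neighborhood of W. Then ∫_W u·Δu dx ≤ −(1/R₁)·∫_W u² dx + (2R₂/R₁)·∫_{∂W} u² dσ + ∫_{∂W} u·(∂u/∂n) dσ. -/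
open Set MeasureTheory intervalIntegral

/-- The four-edge boundary integral `∫_{∂W} g dσ` of `g` over the boundary of the
rectangle `[a₁,b₁]×[a₂,b₂]`. -/
noncomputable def bInt (a₁ b₁ a₂ b₂ : ℝ) (g : ℝ → ℝ → ℝ) : ℝ :=
  (∫ y in a₂..b₂, g a₁ y) + (∫ y in a₂..b₂, g b₁ y) +
  (∫ x in a₁..b₁, g x a₂) + (∫ x in a₁..b₁, g x b₂)


set_option maxHeartbeats 1000000

private lemma swapInt {G : ℝ → ℝ → ℝ} (hG : Continuous fun p : ℝ × ℝ => G p.1 p.2)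
    {a b c d : ℝ} (hab : a ≤ b) (hcd : c ≤ d) :
    (∫ x in a..b, ∫ y in c..d, G x y) = ∫ y in c..d, ∫ x in a..b, G x y := by
  have hi : Integrable (Function.uncurry G)
      ((volume.restrict (Ioc a b)).prod (volume.restrict (Ioc c d))) := by
    rw [Measure.prod_restrict]
    have h2 : IntegrableOn (Function.uncurry G) (Icc a b ×ˢ Icc c d) (volume.prod volume) := by
      have := hG.continuousOn (s := Icc a b ×ˢ Icc c d)
      exact this.integrableOn_compact (isCompact_Icc.prod isCompact_Icc)
    rw [← Measure.volume_eq_prod] at *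
    exact h2.mono_set (Set.prod_mono Ioc_subset_Icc_self Ioc_subset_Icc_self)
  have := MeasureTheory.integral_integral_swap (μ := volume.restrict (Ioc a b))
    (ν := volume.restrict (Ioc c d)) hi
  simpa [intervalIntegral.integral_of_le, hab, hcd] using this

private lemma contSliceY {G : ℝ → ℝ → ℝ} (hG : Continuous fun p : ℝ × ℝ => G p.1 p.2)
    (y : ℝ) : Continuous fun x => G x y :=
  hG.comp (continuous_id.prodMk continuous_const)

private lemma contSliceX {G : ℝ → ℝ → ℝ} (hG : Continuous fun p : ℝ × ℝ => G p.1 p.2)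
    (x : ℝ) : Continuous fun y => G x y :=
  hG.comp (continuous_const.prodMk continuous_id)

private lemma contParamY {G : ℝ → ℝ → ℝ} (hG : Continuous fun p : ℝ × ℝ => G p.1 p.2)
    (c d : ℝ) : Continuous fun x => ∫ y in c..d, G x y :=
  intervalIntegral.continuous_parametric_intervalIntegral_of_continuous' (f := G)
    (μ := volume) hG c d

private lemma contParamX {G : ℝ → ℝ → ℝ} (hG : Continuous fun p : ℝ × ℝ => G p.1 p.2)
    (a b : ℝ) : Continuous fun y => ∫ x in a..b, G x y :=
  contParamY (G := fun y x => G x y) (hG.comp (continuous_snd.prodMk continuous_fst)) a b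

private lemma doubleAdd {a₁ b₁ a₂ b₂ : ℝ} (G H : ℝ → ℝ → ℝ)
    (hG : Continuous fun p : ℝ × ℝ => G p.1 p.2) (hH : Continuous fun p : ℝ × ℝ => H p.1 p.2) :
    (∫ x in a₁..b₁, ∫ y in a₂..b₂, (G x y + H x y))
      = (∫ x in a₁..b₁, ∫ y in a₂..b₂, G x y) + ∫ x in a₁..b₁, ∫ y in a₂..b₂, H x y := by
  have h1 : ∀ x : ℝ, (∫ y in a₂..b₂, (G x y + H x y))
      = (∫ y in a₂..b₂, G x y) + ∫ y in a₂..b₂, H x y := fun x =>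
    intervalIntegral.integral_add ((contSliceX (G := G) hG x).intervalIntegrable _ _)
      ((contSliceX (G := H) hH x).intervalIntegrable _ _)
  rw [intervalIntegral.integral_congr (f := fun x => ∫ y in a₂..b₂, (G x y + H x y))
    (g := fun x => (∫ y in a₂..b₂, G x y) + ∫ y in a₂..b₂, H x y) (fun x _ => h1 x)]
  exact intervalIntegral.integral_add
    ((contParamY (G := G) hG a₂ b₂).intervalIntegrable _ _)
    ((contParamY (G := H) hH a₂ b₂).intervalIntegrable _ _)

private lemma doubleMono {a₁ b₁ a₂ b₂ : ℝ} (hab : a₁ ≤ b₁) (hcd : a₂ ≤ b₂) (G H : ℝ → ℝ → ℝ)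
    (hG : Continuous fun p : ℝ × ℝ => G p.1 p.2) (hH : Continuous fun p : ℝ × ℝ => H p.1 p.2)
    (hpt : ∀ x ∈ Icc a₁ b₁, ∀ y ∈ Icc a₂ b₂, G x y ≤ H x y) :
    (∫ x in a₁..b₁, ∫ y in a₂..b₂, G x y) ≤ ∫ x in a₁..b₁, ∫ y in a₂..b₂, H x y := by
  apply intervalIntegral.integral_mono_on hab
    ((contParamY (G := G) hG a₂ b₂).intervalIntegrable _ _)
    ((contParamY (G := H) hH a₂ b₂).intervalIntegrable _ _)
  intro x hx
  exact intervalIntegral.integral_mono_on hcd ((contSliceX (G := G) hG x).intervalIntegrable _ _)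
    ((contSliceX (G := H) hH x).intervalIntegrable _ _) (fun y hy => hpt x hx y hy)

private lemma stepE1 {a₁ b₁ a₂ b₂ : ℝ} (F F₁₁ F₂₂ : ℝ → ℝ → ℝ)
    (cF : Continuous fun p : ℝ × ℝ => F p.1 p.2)
    (cF11 : Continuous fun p : ℝ × ℝ => F₁₁ p.1 p.2)
    (cF22 : Continuous fun p : ℝ × ℝ => F₂₂ p.1 p.2) :
    (∫ x in a₁..b₁, ∫ y in a₂..b₂, F x y * (F₁₁ x y + F₂₂ x y))
      = (∫ x in a₁..b₁, ∫ y in a₂..b₂, F x y * F₁₁ x y)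
        + ∫ x in a₁..b₁, ∫ y in a₂..b₂, F x y * F₂₂ x y := by
  have h1 : (∫ x in a₁..b₁, ∫ y in a₂..b₂, F x y * (F₁₁ x y + F₂₂ x y))
      = ∫ x in a₁..b₁, ∫ y in a₂..b₂, (F x y * F₁₁ x y + F x y * F₂₂ x y) :=
    intervalIntegral.integral_congr
      (f := fun x => ∫ y in a₂..b₂, F x y * (F₁₁ x y + F₂₂ x y))
      (g := fun x => ∫ y in a₂..b₂, (F x y * F₁₁ x y + F x y * F₂₂ x y))
      (fun x _ => intervalIntegral.integral_congr (fun y _ => by simp only [mul_add]))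
  rw [h1, doubleAdd (fun x y => F x y * F₁₁ x y) (fun x y => F x y * F₂₂ x y)
    (cF.mul cF11) (cF.mul cF22)]

private lemma stepE2 {a₁ b₁ a₂ b₂ : ℝ} (hab : a₁ ≤ b₁) (F F₂ F₂₂ : ℝ → ℝ → ℝ)
    (cF : Continuous fun p : ℝ × ℝ => F p.1 p.2)
    (cF2 : Continuous fun p : ℝ × ℝ => F₂ p.1 p.2)
    (cF22 : Continuous fun p : ℝ × ℝ => F₂₂ p.1 p.2)
    (hB : ∀ x ∈ Icc a₁ b₁, (∫ y in a₂..b₂, (F₂ x y ^ 2 + F x y * F₂₂ x y))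
        = F₂ x b₂ * F x b₂ - F₂ x a₂ * F x a₂) :
    (∫ x in a₁..b₁, ∫ y in a₂..b₂, F x y * F₂₂ x y)
      = ((∫ x in a₁..b₁, F₂ x b₂ * F x b₂) - ∫ x in a₁..b₁, F₂ x a₂ * F x a₂)
        - ∫ x in a₁..b₁, ∫ y in a₂..b₂, F₂ x y ^ 2 := by
  have inner_eq : EqOn (fun x => ∫ y in a₂..b₂, F x y * F₂₂ x y)
      (fun x => (F₂ x b₂ * F x b₂ - F₂ x a₂ * F x a₂) - ∫ y in a₂..b₂, F₂ x y ^ 2)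
      (uIcc a₁ b₁) := by
    intro x hx
    rw [uIcc_of_le hab] at hx
    have h := hB x hx
    have hadd : (∫ y in a₂..b₂, (F₂ x y ^ 2 + F x y * F₂₂ x y))
        = (∫ y in a₂..b₂, F₂ x y ^ 2) + ∫ y in a₂..b₂, F x y * F₂₂ x y :=
      intervalIntegral.integral_add
        ((contSliceX (G := fun x y => F₂ x y ^ 2) (cF2.pow 2) x).intervalIntegrable _ _)
        ((contSliceX (G := fun x y => F x y * F₂₂ x y) (cF.mul cF22) x).intervalIntegrable _ _)
    simp only
    linarith
  rw [intervalIntegral.integral_congr inner_eq,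
    intervalIntegral.integral_sub (f := fun x => F₂ x b₂ * F x b₂ - F₂ x a₂ * F x a₂)
      (g := fun x => ∫ y in a₂..b₂, F₂ x y ^ 2)
      ((((contSliceY (G := F₂) cF2 b₂).mul (contSliceY (G := F) cF b₂)).sub
        ((contSliceY (G := F₂) cF2 a₂).mul (contSliceY (G := F) cF a₂))).intervalIntegrable _ _)
      ((contParamY (G := fun x y => F₂ x y ^ 2) (cF2.pow 2) a₂ b₂).intervalIntegrable _ _),
    intervalIntegral.integral_sub (f := fun x => F₂ x b₂ * F x b₂) (g := fun x => F₂ x a₂ * F x a₂)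
      (((contSliceY (G := F₂) cF2 b₂).mul (contSliceY (G := F) cF b₂)).intervalIntegrable _ _)
      (((contSliceY (G := F₂) cF2 a₂).mul (contSliceY (G := F) cF a₂)).intervalIntegrable _ _)]

private lemma stepE3 {a₁ b₁ a₂ b₂ : ℝ} (hab : a₁ ≤ b₁) (hcd : a₂ ≤ b₂) (F F₁ F₁₁ : ℝ → ℝ → ℝ)
    (cF : Continuous fun p : ℝ × ℝ => F p.1 p.2)
    (cF1 : Continuous fun p : ℝ × ℝ => F₁ p.1 p.2)
    (cF11 : Continuous fun p : ℝ × ℝ => F₁₁ p.1 p.2)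
    (hA : ∀ y ∈ Icc a₂ b₂, (∫ x in a₁..b₁, (F₁ x y ^ 2 + F x y * F₁₁ x y))
        = F₁ b₁ y * F b₁ y - F₁ a₁ y * F a₁ y) :
    (∫ x in a₁..b₁, ∫ y in a₂..b₂, F x y * F₁₁ x y)
      = ((∫ y in a₂..b₂, F₁ b₁ y * F b₁ y) - ∫ y in a₂..b₂, F₁ a₁ y * F a₁ y)
        - ∫ x in a₁..b₁, ∫ y in a₂..b₂, F₁ x y ^ 2 := by
  rw [swapInt (G := fun x y => F x y * F₁₁ x y) (cF.mul cF11) hab hcd,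
    swapInt (G := fun x y => F₁ x y ^ 2) (cF1.pow 2) hab hcd]
  have inner_eq : EqOn (fun y => ∫ x in a₁..b₁, F x y * F₁₁ x y)
      (fun y => (F₁ b₁ y * F b₁ y - F₁ a₁ y * F a₁ y) - ∫ x in a₁..b₁, F₁ x y ^ 2)
      (uIcc a₂ b₂) := by
    intro y hy
    rw [uIcc_of_le hcd] at hy
    have h := hA y hy
    have hadd : (∫ x in a₁..b₁, (F₁ x y ^ 2 + F x y * F₁₁ x y))
        = (∫ x in a₁..b₁, F₁ x y ^ 2) + ∫ x in a₁..b₁, F x y * F₁₁ x y :=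
      intervalIntegral.integral_add
        ((contSliceY (G := fun x y => F₁ x y ^ 2) (cF1.pow 2) y).intervalIntegrable _ _)
        ((contSliceY (G := fun x y => F x y * F₁₁ x y) (cF.mul cF11) y).intervalIntegrable _ _)
    simp only
    linarith
  rw [intervalIntegral.integral_congr inner_eq,
    intervalIntegral.integral_sub (f := fun y => F₁ b₁ y * F b₁ y - F₁ a₁ y * F a₁ y)
      (g := fun y => ∫ x in a₁..b₁, F₁ x y ^ 2)
      ((((contSliceX (G := F₁) cF1 b₁).mul (contSliceX (G := F) cF b₁)).sub
        ((contSliceX (G := F₁) cF1 a₁).mul (contSliceX (G := F) cF a₁))).intervalIntegrable _ _)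
      ((contParamX (G := fun x y => F₁ x y ^ 2) (cF1.pow 2) a₁ b₁).intervalIntegrable _ _),
    intervalIntegral.integral_sub (f := fun y => F₁ b₁ y * F b₁ y) (g := fun y => F₁ a₁ y * F a₁ y)
      (((contSliceX (G := F₁) cF1 b₁).mul (contSliceX (G := F) cF b₁)).intervalIntegrable _ _)
      (((contSliceX (G := F₁) cF1 a₁).mul (contSliceX (G := F) cF a₁)).intervalIntegrable _ _)]
private lemma stepE4 {a₁ b₁ a₂ b₂ : ℝ} (hab : a₁ ≤ b₁) (hcd : a₂ ≤ b₂) (F F₁ : ℝ → ℝ → ℝ)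
    (cF : Continuous fun p : ℝ × ℝ => F p.1 p.2)
    (cF1 : Continuous fun p : ℝ × ℝ => F₁ p.1 p.2)
    (hC : ∀ y ∈ Icc a₂ b₂, (∫ x in a₁..b₁, (F x y ^ 2 + 2 * x * F x y * F₁ x y))
        = b₁ * F b₁ y ^ 2 - a₁ * F a₁ y ^ 2) :
    (∫ x in a₁..b₁, ∫ y in a₂..b₂, F x y ^ 2)
      + (∫ x in a₁..b₁, ∫ y in a₂..b₂, 2 * x * F x y * F₁ x y)
      = b₁ * (∫ y in a₂..b₂, F b₁ y ^ 2) - a₁ * ∫ y in a₂..b₂, F a₁ y ^ 2 := by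
  have cQx : Continuous fun p : ℝ × ℝ => 2 * p.1 * F p.1 p.2 * F₁ p.1 p.2 :=
    ((continuous_const.mul continuous_fst).mul cF).mul cF1
  rw [swapInt (G := fun x y => F x y ^ 2) (cF.pow 2) hab hcd,
    swapInt (G := fun x y => 2 * x * F x y * F₁ x y) cQx hab hcd,
    ← doubleAdd (fun y x => F x y ^ 2) (fun y x => 2 * x * F x y * F₁ x y)
      ((cF.pow 2).comp (continuous_snd.prodMk continuous_fst))
      (cQx.comp (continuous_snd.prodMk continuous_fst))]
  have heq : EqOn (fun y => ∫ x in a₁..b₁, (F x y ^ 2 + 2 * x * F x y * F₁ x y))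
      (fun y => b₁ * F b₁ y ^ 2 - a₁ * F a₁ y ^ 2) (uIcc a₂ b₂) := by
    intro y hy
    rw [uIcc_of_le hcd] at hy
    exact hC y hy
  rw [intervalIntegral.integral_congr heq,
    intervalIntegral.integral_sub (f := fun y => b₁ * F b₁ y ^ 2) (g := fun y => a₁ * F a₁ y ^ 2)
      ((continuous_const.mul ((contSliceX (G := F) cF b₁).pow 2)).intervalIntegrable _ _)
      ((continuous_const.mul ((contSliceX (G := F) cF a₁).pow 2)).intervalIntegrable _ _),
    intervalIntegral.integral_const_mul, intervalIntegral.integral_const_mul]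

private lemma stepE5 {a₁ b₁ a₂ b₂ : ℝ} (hab : a₁ ≤ b₁) (F F₂ : ℝ → ℝ → ℝ)
    (cF : Continuous fun p : ℝ × ℝ => F p.1 p.2)
    (cF2 : Continuous fun p : ℝ × ℝ => F₂ p.1 p.2)
    (hD : ∀ x ∈ Icc a₁ b₁, (∫ y in a₂..b₂, (F x y ^ 2 + 2 * y * F x y * F₂ x y))
        = b₂ * F x b₂ ^ 2 - a₂ * F x a₂ ^ 2) :
    (∫ x in a₁..b₁, ∫ y in a₂..b₂, F x y ^ 2)
      + (∫ x in a₁..b₁, ∫ y in a₂..b₂, 2 * y * F x y * F₂ x y)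
      = b₂ * (∫ x in a₁..b₁, F x b₂ ^ 2) - a₂ * ∫ x in a₁..b₁, F x a₂ ^ 2 := by
  have cQy : Continuous fun p : ℝ × ℝ => 2 * p.2 * F p.1 p.2 * F₂ p.1 p.2 :=
    ((continuous_const.mul continuous_snd).mul cF).mul cF2
  rw [← doubleAdd (fun x y => F x y ^ 2) (fun x y => 2 * y * F x y * F₂ x y) (cF.pow 2) cQy]
  have heq : EqOn (fun x => ∫ y in a₂..b₂, (F x y ^ 2 + 2 * y * F x y * F₂ x y))
      (fun x => b₂ * F x b₂ ^ 2 - a₂ * F x a₂ ^ 2) (uIcc a₁ b₁) := by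
    intro x hx
    rw [uIcc_of_le hab] at hx
    exact hD x hx
  rw [intervalIntegral.integral_congr heq,
    intervalIntegral.integral_sub (f := fun x => b₂ * F x b₂ ^ 2) (g := fun x => a₂ * F x a₂ ^ 2)
      ((continuous_const.mul ((contSliceY (G := F) cF b₂).pow 2)).intervalIntegrable _ _)
      ((continuous_const.mul ((contSliceY (G := F) cF a₂).pow 2)).intervalIntegrable _ _),
    intervalIntegral.integral_const_mul, intervalIntegral.integral_const_mul]

private lemma stepE6 {a₁ b₁ a₂ b₂ : ℝ} (hab : a₁ ≤ b₁) (hcd : a₂ ≤ b₂) (F F₁ F₂ : ℝ → ℝ → ℝ)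
    (cF : Continuous fun p : ℝ × ℝ => F p.1 p.2)
    (cF1 : Continuous fun p : ℝ × ℝ => F₁ p.1 p.2)
    (cF2 : Continuous fun p : ℝ × ℝ => F₂ p.1 p.2)
    (R₁ : ℝ) (hR1 : 0 < R₁)
    (hxy : ∀ x ∈ Icc a₁ b₁, ∀ y ∈ Icc a₂ b₂, x ^ 2 + y ^ 2 ≤ R₁) :
    -((∫ x in a₁..b₁, ∫ y in a₂..b₂, 2 * x * F x y * F₁ x y)
        + ∫ x in a₁..b₁, ∫ y in a₂..b₂, 2 * y * F x y * F₂ x y)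
      ≤ (∫ x in a₁..b₁, ∫ y in a₂..b₂, F x y ^ 2)
        + R₁ * ((∫ x in a₁..b₁, ∫ y in a₂..b₂, F₁ x y ^ 2)
          + ∫ x in a₁..b₁, ∫ y in a₂..b₂, F₂ x y ^ 2) := by
  have cQx : Continuous fun p : ℝ × ℝ => 2 * p.1 * F p.1 p.2 * F₁ p.1 p.2 :=
    ((continuous_const.mul continuous_fst).mul cF).mul cF1
  have cQy : Continuous fun p : ℝ × ℝ => 2 * p.2 * F p.1 p.2 * F₂ p.1 p.2 :=
    ((continuous_const.mul continuous_snd).mul cF).mul cF2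
  have hmono := doubleMono hab hcd
    (fun x y => -(2 * x * F x y * F₁ x y + 2 * y * F x y * F₂ x y))
    (fun x y => F x y ^ 2 + R₁ * (F₁ x y ^ 2 + F₂ x y ^ 2))
    ((cQx.add cQy).neg) ((cF.pow 2).add (continuous_const.mul ((cF1.pow 2).add (cF2.pow 2))))
    (by
      intro x hx y hy
      have h := hxy x hx y hy
      beta_reduce
      nlinarith [sq_nonneg (x * F x y + R₁ * F₁ x y), sq_nonneg (y * F x y + R₁ * F₂ x y),
        mul_nonneg (sq_nonneg (F x y)) (sub_nonneg.2 h), hR1])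
  have hL : (∫ x in a₁..b₁, ∫ y in a₂..b₂,
      -(2 * x * F x y * F₁ x y + 2 * y * F x y * F₂ x y))
      = -((∫ x in a₁..b₁, ∫ y in a₂..b₂, 2 * x * F x y * F₁ x y)
        + ∫ x in a₁..b₁, ∫ y in a₂..b₂, 2 * y * F x y * F₂ x y) := by
    simp only [intervalIntegral.integral_neg]
    rw [doubleAdd (fun x y => 2 * x * F x y * F₁ x y) (fun x y => 2 * y * F x y * F₂ x y)
      cQx cQy]
  have hR : (∫ x in a₁..b₁, ∫ y in a₂..b₂, (F x y ^ 2 + R₁ * (F₁ x y ^ 2 + F₂ x y ^ 2)))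
      = (∫ x in a₁..b₁, ∫ y in a₂..b₂, F x y ^ 2)
        + R₁ * ((∫ x in a₁..b₁, ∫ y in a₂..b₂, F₁ x y ^ 2)
          + ∫ x in a₁..b₁, ∫ y in a₂..b₂, F₂ x y ^ 2) := by
    rw [doubleAdd (fun x y => F x y ^ 2) (fun x y => R₁ * (F₁ x y ^ 2 + F₂ x y ^ 2))
      (cF.pow 2) (continuous_const.mul ((cF1.pow 2).add (cF2.pow 2)))]
    congr 1
    simp only [intervalIntegral.integral_const_mul]
    rw [doubleAdd (fun x y => F₁ x y ^ 2) (fun x y => F₂ x y ^ 2) (cF1.pow 2) (cF2.pow 2)]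
  rw [hL, hR] at hmono
  exact hmono
private theorem auxMain (a₁ b₁ a₂ b₂ : ℝ) (hab : a₁ ≤ b₁) (hcd : a₂ ≤ b₂)
    (F F₁ F₂ F₁₁ F₂₂ : ℝ → ℝ → ℝ)
    (cF : Continuous fun p : ℝ × ℝ => F p.1 p.2)
    (cF1 : Continuous fun p : ℝ × ℝ => F₁ p.1 p.2)
    (cF2 : Continuous fun p : ℝ × ℝ => F₂ p.1 p.2)
    (cF11 : Continuous fun p : ℝ × ℝ => F₁₁ p.1 p.2)
    (cF22 : Continuous fun p : ℝ × ℝ => F₂₂ p.1 p.2)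
    (hA : ∀ y ∈ Icc a₂ b₂, (∫ x in a₁..b₁, (F₁ x y ^ 2 + F x y * F₁₁ x y))
        = F₁ b₁ y * F b₁ y - F₁ a₁ y * F a₁ y)
    (hB : ∀ x ∈ Icc a₁ b₁, (∫ y in a₂..b₂, (F₂ x y ^ 2 + F x y * F₂₂ x y))
        = F₂ x b₂ * F x b₂ - F₂ x a₂ * F x a₂)
    (hC : ∀ y ∈ Icc a₂ b₂, (∫ x in a₁..b₁, (F x y ^ 2 + 2 * x * F x y * F₁ x y))
        = b₁ * F b₁ y ^ 2 - a₁ * F a₁ y ^ 2)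
    (hD : ∀ x ∈ Icc a₁ b₁, (∫ y in a₂..b₂, (F x y ^ 2 + 2 * y * F x y * F₂ x y))
        = b₂ * F x b₂ ^ 2 - a₂ * F x a₂ ^ 2)
    (R₁ R₂ : ℝ) (hR1 : 0 < R₁) (hR2 : 0 ≤ R₂)
    (hxy : ∀ x ∈ Icc a₁ b₁, ∀ y ∈ Icc a₂ b₂, x ^ 2 + y ^ 2 ≤ R₁)
    (eb₁ : b₁ ≤ R₂) (ea₁ : -a₁ ≤ R₂) (eb₂ : b₂ ≤ R₂) (ea₂ : -a₂ ≤ R₂) :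
    (∫ x in a₁..b₁, ∫ y in a₂..b₂, F x y * (F₁₁ x y + F₂₂ x y))
    ≤ -(1 / R₁) * (∫ x in a₁..b₁, ∫ y in a₂..b₂, F x y ^ 2)
      + (2 * R₂ / R₁) * ((∫ y in a₂..b₂, F a₁ y ^ 2) + (∫ y in a₂..b₂, F b₁ y ^ 2)
          + (∫ x in a₁..b₁, F x a₂ ^ 2) + (∫ x in a₁..b₁, F x b₂ ^ 2))
      + ((∫ y in a₂..b₂, F₁ b₁ y * F b₁ y) - (∫ y in a₂..b₂, F₁ a₁ y * F a₁ y)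
        + (∫ x in a₁..b₁, F₂ x b₂ * F x b₂) - (∫ x in a₁..b₁, F₂ x a₂ * F x a₂)) := by
  have E1 := stepE1 (a₁ := a₁) (b₁ := b₁) (a₂ := a₂) (b₂ := b₂) F F₁₁ F₂₂ cF cF11 cF22
  have E2 := stepE2 (a₂ := a₂) (b₂ := b₂) hab F F₂ F₂₂ cF cF2 cF22 hB
  have E3 := stepE3 hab hcd F F₁ F₁₁ cF cF1 cF11 hA
  have E4 := stepE4 hab hcd F F₁ cF cF1 hC
  have E5 := stepE5 (a₂ := a₂) (b₂ := b₂) hab F F₂ cF cF2 hD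
  have E6 := stepE6 hab hcd F F₁ F₂ cF cF1 cF2 R₁ hR1 hxy
  set D1 : ℝ := ∫ x in a₁..b₁, ∫ y in a₂..b₂, F₁ x y ^ 2
  set D2 : ℝ := ∫ x in a₁..b₁, ∫ y in a₂..b₂, F₂ x y ^ 2
  set P : ℝ := ∫ x in a₁..b₁, ∫ y in a₂..b₂, F x y ^ 2
  set Qx : ℝ := ∫ x in a₁..b₁, ∫ y in a₂..b₂, 2 * x * F x y * F₁ x y
  set Qy : ℝ := ∫ x in a₁..b₁, ∫ y in a₂..b₂, 2 * y * F x y * F₂ x y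
  set Il : ℝ := ∫ y in a₂..b₂, F a₁ y ^ 2 with hIl
  set Ir : ℝ := ∫ y in a₂..b₂, F b₁ y ^ 2 with hIr
  set Ib : ℝ := ∫ x in a₁..b₁, F x a₂ ^ 2 with hIb
  set It : ℝ := ∫ x in a₁..b₁, F x b₂ ^ 2 with hIt
  have hIl0 : 0 ≤ Il := by
    rw [hIl]; exact intervalIntegral.integral_nonneg hcd fun y _ => sq_nonneg _
  have hIr0 : 0 ≤ Ir := by
    rw [hIr]; exact intervalIntegral.integral_nonneg hcd fun y _ => sq_nonneg _
  have hIb0 : 0 ≤ Ib := by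
    rw [hIb]; exact intervalIntegral.integral_nonneg hab fun x _ => sq_nonneg _
  have hIt0 : 0 ≤ It := by
    rw [hIt]; exact intervalIntegral.integral_nonneg hab fun x _ => sq_nonneg _
  have hBn : b₁ * Ir - a₁ * Il + (b₂ * It - a₂ * Ib) ≤ R₂ * (Il + Ir + Ib + It) := by
    have k1 := mul_le_mul_of_nonneg_right eb₁ hIr0
    have k2 := mul_le_mul_of_nonneg_right ea₁ hIl0
    have k3 := mul_le_mul_of_nonneg_right eb₂ hIt0
    have k4 := mul_le_mul_of_nonneg_right ea₂ hIb0
    nlinarith [k1, k2, k3, k4]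
  have hPle : P ≤ R₂ * (Il + Ir + Ib + It) + R₁ * (D1 + D2) := by linarith
  rw [E1, E3, E2]
  have key : (1 / R₁) * P ≤ (R₂ / R₁) * (Il + Ir + Ib + It) + (D1 + D2) := by
    have h := mul_le_mul_of_nonneg_left hPle (le_of_lt (one_div_pos.2 hR1))
    have hne : R₁ ≠ 0 := ne_of_gt hR1
    calc (1 / R₁) * P ≤ (1 / R₁) * (R₂ * (Il + Ir + Ib + It) + R₁ * (D1 + D2)) := h
      _ = (R₂ / R₁) * (Il + Ir + Ib + It) + (D1 + D2) := by field_simp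
  have h2 : 0 ≤ (R₂ / R₁) * (Il + Ir + Ib + It) :=
    mul_nonneg (div_nonneg hR2 hR1.le) (by linarith)
  have h3 : 2 * R₂ / R₁ * (Il + Ir + Ib + It)
      = (R₂ / R₁) * (Il + Ir + Ib + It) + (R₂ / R₁) * (Il + Ir + Ib + It) := by ring
  linarith [key, h2, h3]

/-- Lemma 1 of the paper (diffusion-term estimate) on the rectangle
`W = [a₁,b₁]×[a₂,b₂]`, with `R₁ = sup_{x∈W}|x|²`, `R₂ = sup_{x∈∂W}|x|`:
`∫_W u·Δu ≤ −(1/R₁)·∫_W u² + (2R₂/R₁)·∫_{∂W} u² dσ + ∫_{∂W} u·(∂u/∂n) dσ`. -/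
theorem stmt5 (a₁ b₁ a₂ b₂ : ℝ) (h₁ : a₁ < b₁) (h₂ : a₂ < b₂)
    (u : ℝ → ℝ → ℝ)
    (hu : ∃ U : Set (ℝ × ℝ), IsOpen U ∧ (Icc a₁ b₁ ×ˢ Icc a₂ b₂) ⊆ U ∧
      ContDiffOn ℝ 2 (fun p : ℝ × ℝ => u p.1 p.2) U)
    (R₁ R₂ : ℝ)
    (hR₁ : R₁ = sSup ((fun p : ℝ × ℝ => p.1 ^ 2 + p.2 ^ 2) '' (Icc a₁ b₁ ×ˢ Icc a₂ b₂)))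
    (hR₂ : R₂ = sSup ((fun p : ℝ × ℝ => Real.sqrt (p.1 ^ 2 + p.2 ^ 2)) ''
      ((({a₁, b₁} : Set ℝ) ×ˢ Icc a₂ b₂) ∪ (Icc a₁ b₁ ×ˢ ({a₂, b₂} : Set ℝ))))) :
    (∫ x in a₁..b₁, ∫ y in a₂..b₂,
        u x y * (deriv (fun s => deriv (fun s' => u s' y) s) x
               + deriv (fun s => deriv (fun s' => u x s') s) y))
    ≤ -(1 / R₁) * (∫ x in a₁..b₁, ∫ y in a₂..b₂, (u x y) ^ 2)
      + (2 * R₂ / R₁) * bInt a₁ b₁ a₂ b₂ (fun x y => (u x y) ^ 2)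
      + ((∫ y in a₂..b₂, deriv (fun s => u s y) b₁ * u b₁ y)
        - (∫ y in a₂..b₂, deriv (fun s => u s y) a₁ * u a₁ y)
        + (∫ x in a₁..b₁, deriv (fun s => u x s) b₂ * u x b₂)
        - (∫ x in a₁..b₁, deriv (fun s => u x s) a₂ * u x a₂)) := by
  obtain ⟨U, hUopen, hKU, hf⟩ := hu
  have hab : a₁ ≤ b₁ := le_of_lt h₁
  have hcd : a₂ ≤ b₂ := le_of_lt h₂
  set f : ℝ × ℝ → ℝ := fun p => u p.1 p.2 with hfdef
  set f₁ : ℝ × ℝ → ℝ := fun p => fderiv ℝ f p (1, 0) with hf1def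
  set f₂ : ℝ × ℝ → ℝ := fun p => fderiv ℝ f p (0, 1) with hf2def
  have hf' : ContDiffOn ℝ 1 (fun p => fderiv ℝ f p) U := hf.fderiv_of_isOpen hUopen (by norm_num)
  have hc1 : ContDiffOn ℝ 1 f₁ U := hf'.clm_apply contDiffOn_const
  have hc2 : ContDiffOn ℝ 1 f₂ U := hf'.clm_apply contDiffOn_const
  set f₁₁ : ℝ × ℝ → ℝ := fun p => fderiv ℝ f₁ p (1, 0) with hf11def
  set f₂₂ : ℝ × ℝ → ℝ := fun p => fderiv ℝ f₂ p (0, 1) with hf22def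
  -- first derivatives of the slices
  have hd1 : ∀ x y : ℝ, (x, y) ∈ U → HasDerivAt (fun s => u s y) (f₁ (x, y)) x := by
    intro x y hp
    have hdf : HasFDerivAt f (fderiv ℝ f (x, y)) (x, y) :=
      ((hf.differentiableOn (by norm_num)).differentiableAt (hUopen.mem_nhds hp)).hasFDerivAt
    exact hdf.comp_hasDerivAt x ((hasDerivAt_id x).prodMk (hasDerivAt_const x y))
  have hd2 : ∀ x y : ℝ, (x, y) ∈ U → HasDerivAt (fun t => u x t) (f₂ (x, y)) y := by
    intro x y hp
    have hdf : HasFDerivAt f (fderiv ℝ f (x, y)) (x, y) :=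
      ((hf.differentiableOn (by norm_num)).differentiableAt (hUopen.mem_nhds hp)).hasFDerivAt
    exact hdf.comp_hasDerivAt y ((hasDerivAt_const y x).prodMk (hasDerivAt_id y))
  -- second derivatives of the slices
  have hd11 : ∀ x y : ℝ, (x, y) ∈ U → HasDerivAt (fun s => f₁ (s, y)) (f₁₁ (x, y)) x := by
    intro x y hp
    have hdf : HasFDerivAt f₁ (fderiv ℝ f₁ (x, y)) (x, y) :=
      ((hc1.differentiableOn (by norm_num)).differentiableAt (hUopen.mem_nhds hp)).hasFDerivAt
    exact hdf.comp_hasDerivAt x ((hasDerivAt_id x).prodMk (hasDerivAt_const x y))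
  have hd22 : ∀ x y : ℝ, (x, y) ∈ U → HasDerivAt (fun t => f₂ (x, t)) (f₂₂ (x, y)) y := by
    intro x y hp
    have hdf : HasFDerivAt f₂ (fderiv ℝ f₂ (x, y)) (x, y) :=
      ((hc2.differentiableOn (by norm_num)).differentiableAt (hUopen.mem_nhds hp)).hasFDerivAt
    exact hdf.comp_hasDerivAt y ((hasDerivAt_const y x).prodMk (hasDerivAt_id y))
  -- iterated deriv identities
  have hder2x : ∀ x y : ℝ, (x, y) ∈ U →
      deriv (fun s => deriv (fun s' => u s' y) s) x = f₁₁ (x, y) := by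
    intro x y hp
    have hev : (fun s => f₁ (s, y)) =ᶠ[nhds x] fun s => deriv (fun s' => u s' y) s := by
      have hnb : ∀ᶠ s in nhds x, (s, y) ∈ U :=
        ((continuous_id.prodMk continuous_const).continuousAt (x := x)).preimage_mem_nhds
          (hUopen.mem_nhds hp)
      filter_upwards [hnb] with s hs
      exact ((hd1 s y hs).deriv).symm
    exact ((hd11 x y hp).congr_of_eventuallyEq hev.symm).deriv
  have hder2y : ∀ x y : ℝ, (x, y) ∈ U →
      deriv (fun t => deriv (fun t' => u x t') t) y = f₂₂ (x, y) := by
    intro x y hp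
    have hev : (fun t => f₂ (x, t)) =ᶠ[nhds y] fun t => deriv (fun t' => u x t') t := by
      have hnb : ∀ᶠ t in nhds y, (x, t) ∈ U :=
        ((continuous_const.prodMk continuous_id).continuousAt (x := y)).preimage_mem_nhds
          (hUopen.mem_nhds hp)
      filter_upwards [hnb] with t ht
      exact ((hd2 x t ht).deriv).symm
    exact ((hd22 x y hp).congr_of_eventuallyEq hev.symm).deriv
  -- continuity on U
  have hcf : ContinuousOn f U := hf.continuousOn
  have hcf1 : ContinuousOn f₁ U := hc1.continuousOn
  have hcf2 : ContinuousOn f₂ U := hc2.continuousOn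
  have hcf11 : ContinuousOn f₁₁ U :=
    ((hc1.continuousOn_fderiv_of_isOpen hUopen le_rfl).clm_apply continuousOn_const)
  have hcf22 : ContinuousOn f₂₂ U :=
    ((hc2.continuousOn_fderiv_of_isOpen hUopen le_rfl).clm_apply continuousOn_const)
  -- clamping
  set c₁ : ℝ → ℝ := fun x => min b₁ (max a₁ x) with hc₁def
  set c₂ : ℝ → ℝ := fun y => min b₂ (max a₂ y) with hc₂def
  have cc₁ : Continuous c₁ := continuous_const.min (continuous_const.max continuous_id)
  have cc₂ : Continuous c₂ := continuous_const.min (continuous_const.max continuous_id)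
  have mem₁ : ∀ x, c₁ x ∈ Icc a₁ b₁ := fun x => ⟨le_min hab (le_max_left _ _), min_le_left _ _⟩
  have mem₂ : ∀ y, c₂ y ∈ Icc a₂ b₂ := fun y => ⟨le_min hcd (le_max_left _ _), min_le_left _ _⟩
  have id₁ : ∀ x ∈ Icc a₁ b₁, c₁ x = x := by
    intro x hx
    simp only [hc₁def]
    rw [max_eq_right hx.1, min_eq_right hx.2]
  have id₂ : ∀ y ∈ Icc a₂ b₂, c₂ y = y := by
    intro y hy
    simp only [hc₂def]
    rw [max_eq_right hy.1, min_eq_right hy.2]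
  have memU : ∀ p : ℝ × ℝ, ((c₁ p.1, c₂ p.2) : ℝ × ℝ) ∈ U := fun p => hKU ⟨mem₁ p.1, mem₂ p.2⟩
  have cC : Continuous fun p : ℝ × ℝ => ((c₁ p.1, c₂ p.2) : ℝ × ℝ) :=
    (cc₁.comp continuous_fst).prodMk (cc₂.comp continuous_snd)
  set F : ℝ → ℝ → ℝ := fun x y => f (c₁ x, c₂ y) with hFdef
  set F1 : ℝ → ℝ → ℝ := fun x y => f₁ (c₁ x, c₂ y) with hF1def
  set F2 : ℝ → ℝ → ℝ := fun x y => f₂ (c₁ x, c₂ y) with hF2def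
  set F11 : ℝ → ℝ → ℝ := fun x y => f₁₁ (c₁ x, c₂ y) with hF11def
  set F22 : ℝ → ℝ → ℝ := fun x y => f₂₂ (c₁ x, c₂ y) with hF22def
  have cF : Continuous fun p : ℝ × ℝ => F p.1 p.2 := hcf.comp_continuous cC memU
  have cF1 : Continuous fun p : ℝ × ℝ => F1 p.1 p.2 := hcf1.comp_continuous cC memU
  have cF2 : Continuous fun p : ℝ × ℝ => F2 p.1 p.2 := hcf2.comp_continuous cC memU
  have cF11 : Continuous fun p : ℝ × ℝ => F11 p.1 p.2 := hcf11.comp_continuous cC memU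
  have cF22 : Continuous fun p : ℝ × ℝ => F22 p.1 p.2 := hcf22.comp_continuous cC memU
  -- membership shorthands
  have hma1 : a₁ ∈ Icc a₁ b₁ := ⟨le_rfl, hab⟩
  have hmb1 : b₁ ∈ Icc a₁ b₁ := ⟨hab, le_rfl⟩
  have hma2 : a₂ ∈ Icc a₂ b₂ := ⟨le_rfl, hcd⟩
  have hmb2 : b₂ ∈ Icc a₂ b₂ := ⟨hcd, le_rfl⟩
  -- slice continuity helpers
  have sliceY : ∀ g : ℝ × ℝ → ℝ, ContinuousOn g U → ∀ y ∈ Icc a₂ b₂,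
      ContinuousOn (fun x => g (x, y)) (uIcc a₁ b₁) := by
    intro g hg y hy
    apply hg.comp (Continuous.continuousOn (continuous_id.prodMk continuous_const))
    intro x hx
    rw [uIcc_of_le hab] at hx
    exact hKU ⟨hx, hy⟩
  have sliceX : ∀ g : ℝ × ℝ → ℝ, ContinuousOn g U → ∀ x ∈ Icc a₁ b₁,
      ContinuousOn (fun y => g (x, y)) (uIcc a₂ b₂) := by
    intro g hg x hx
    apply hg.comp (Continuous.continuousOn (continuous_const.prodMk continuous_id))
    intro y hy
    rw [uIcc_of_le hcd] at hy
    exact hKU ⟨hx, hy⟩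
  -- the four FTC slice identities
  have hA : ∀ y ∈ Icc a₂ b₂, (∫ x in a₁..b₁, (F1 x y ^ 2 + F x y * F11 x y))
      = F1 b₁ y * F b₁ y - F1 a₁ y * F a₁ y := by
    intro y hy
    have hmem : ∀ x ∈ uIcc a₁ b₁, ((x, y) : ℝ × ℝ) ∈ U := by
      intro x hx; rw [uIcc_of_le hab] at hx; exact hKU ⟨hx, hy⟩
    have hFTC : (∫ x in a₁..b₁, (f₁₁ (x, y) * u x y + f₁ (x, y) * f₁ (x, y)))
        = f₁ (b₁, y) * u b₁ y - f₁ (a₁, y) * u a₁ y := by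
      apply intervalIntegral.integral_eq_sub_of_hasDerivAt
        (f := fun x => f₁ (x, y) * u x y)
      · intro x hx
        exact (hd11 x y (hmem x hx)).mul (hd1 x y (hmem x hx))
      · apply ContinuousOn.intervalIntegrable
        exact ((sliceY f₁₁ hcf11 y hy).mul (sliceY f hcf y hy)).add
          ((sliceY f₁ hcf1 y hy).mul (sliceY f₁ hcf1 y hy))
    have hcongr : EqOn (fun x => F1 x y ^ 2 + F x y * F11 x y)
        (fun x => f₁₁ (x, y) * u x y + f₁ (x, y) * f₁ (x, y)) (uIcc a₁ b₁) := by
      intro x hx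
      rw [uIcc_of_le hab] at hx
      simp only [hF1def, hFdef, hF11def, id₁ x hx, id₂ y hy, hfdef]
      ring
    rw [intervalIntegral.integral_congr hcongr, hFTC]
    simp only [hF1def, hFdef, id₁ b₁ hmb1, id₁ a₁ hma1, id₂ y hy, hfdef]
  have hB : ∀ x ∈ Icc a₁ b₁, (∫ y in a₂..b₂, (F2 x y ^ 2 + F x y * F22 x y))
      = F2 x b₂ * F x b₂ - F2 x a₂ * F x a₂ := by
    intro x hx
    have hmem : ∀ y ∈ uIcc a₂ b₂, ((x, y) : ℝ × ℝ) ∈ U := by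
      intro y hy; rw [uIcc_of_le hcd] at hy; exact hKU ⟨hx, hy⟩
    have hFTC : (∫ y in a₂..b₂, (f₂₂ (x, y) * u x y + f₂ (x, y) * f₂ (x, y)))
        = f₂ (x, b₂) * u x b₂ - f₂ (x, a₂) * u x a₂ := by
      apply intervalIntegral.integral_eq_sub_of_hasDerivAt
        (f := fun y => f₂ (x, y) * u x y)
      · intro y hy
        exact (hd22 x y (hmem y hy)).mul (hd2 x y (hmem y hy))
      · apply ContinuousOn.intervalIntegrable
        exact ((sliceX f₂₂ hcf22 x hx).mul (sliceX f hcf x hx)).add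
          ((sliceX f₂ hcf2 x hx).mul (sliceX f₂ hcf2 x hx))
    have hcongr : EqOn (fun y => F2 x y ^ 2 + F x y * F22 x y)
        (fun y => f₂₂ (x, y) * u x y + f₂ (x, y) * f₂ (x, y)) (uIcc a₂ b₂) := by
      intro y hy
      rw [uIcc_of_le hcd] at hy
      simp only [hF2def, hFdef, hF22def, id₁ x hx, id₂ y hy, hfdef]
      ring
    rw [intervalIntegral.integral_congr hcongr, hFTC]
    simp only [hF2def, hFdef, id₂ b₂ hmb2, id₂ a₂ hma2, id₁ x hx, hfdef]
  have hC : ∀ y ∈ Icc a₂ b₂, (∫ x in a₁..b₁, (F x y ^ 2 + 2 * x * F x y * F1 x y))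
      = b₁ * F b₁ y ^ 2 - a₁ * F a₁ y ^ 2 := by
    intro y hy
    have hmem : ∀ x ∈ uIcc a₁ b₁, ((x, y) : ℝ × ℝ) ∈ U := by
      intro x hx; rw [uIcc_of_le hab] at hx; exact hKU ⟨hx, hy⟩
    have hFTC : (∫ x in a₁..b₁, (u x y ^ 2 + x * (2 * u x y ^ 1 * f₁ (x, y))))
        = b₁ * u b₁ y ^ 2 - a₁ * u a₁ y ^ 2 := by
      apply intervalIntegral.integral_eq_sub_of_hasDerivAt
        (f := fun x => x * u x y ^ 2)
      · intro x hx
        have h := (hasDerivAt_id x).mul ((hd1 x y (hmem x hx)).pow 2)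
        convert h using 1
        all_goals norm_num [Pi.pow_def, Pi.mul_def]
        rfl
      · apply ContinuousOn.intervalIntegrable
        exact (((sliceY f hcf y hy).pow 2).add
          (continuousOn_id.mul ((continuousOn_const.mul ((sliceY f hcf y hy).pow 1)).mul
            (sliceY f₁ hcf1 y hy))))
    have hcongr : EqOn (fun x => F x y ^ 2 + 2 * x * F x y * F1 x y)
        (fun x => u x y ^ 2 + x * (2 * u x y ^ 1 * f₁ (x, y))) (uIcc a₁ b₁) := by
      intro x hx
      rw [uIcc_of_le hab] at hx
      simp only [hF1def, hFdef, id₁ x hx, id₂ y hy, hfdef]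
      ring
    rw [intervalIntegral.integral_congr hcongr, hFTC]
    simp only [hFdef, id₁ b₁ hmb1, id₁ a₁ hma1, id₂ y hy, hfdef]
  have hD : ∀ x ∈ Icc a₁ b₁, (∫ y in a₂..b₂, (F x y ^ 2 + 2 * y * F x y * F2 x y))
      = b₂ * F x b₂ ^ 2 - a₂ * F x a₂ ^ 2 := by
    intro x hx
    have hmem : ∀ y ∈ uIcc a₂ b₂, ((x, y) : ℝ × ℝ) ∈ U := by
      intro y hy; rw [uIcc_of_le hcd] at hy; exact hKU ⟨hx, hy⟩
    have hFTC : (∫ y in a₂..b₂, (u x y ^ 2 + y * (2 * u x y ^ 1 * f₂ (x, y))))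
        = b₂ * u x b₂ ^ 2 - a₂ * u x a₂ ^ 2 := by
      apply intervalIntegral.integral_eq_sub_of_hasDerivAt
        (f := fun y => y * u x y ^ 2)
      · intro y hy
        have h := (hasDerivAt_id y).mul ((hd2 x y (hmem y hy)).pow 2)
        convert h using 1
        all_goals norm_num [Pi.pow_def, Pi.mul_def]
        rfl
      · apply ContinuousOn.intervalIntegrable
        exact (((sliceX f hcf x hx).pow 2).add
          (continuousOn_id.mul ((continuousOn_const.mul ((sliceX f hcf x hx).pow 1)).mul
            (sliceX f₂ hcf2 x hx))))
    have hcongr : EqOn (fun y => F x y ^ 2 + 2 * y * F x y * F2 x y)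
        (fun y => u x y ^ 2 + y * (2 * u x y ^ 1 * f₂ (x, y))) (uIcc a₂ b₂) := by
      intro y hy
      rw [uIcc_of_le hcd] at hy
      simp only [hF2def, hFdef, id₁ x hx, id₂ y hy, hfdef]
      ring
    rw [intervalIntegral.integral_congr hcongr, hFTC]
    simp only [hFdef, id₂ b₂ hmb2, id₂ a₂ hma2, id₁ x hx, hfdef]
  -- bounds from the suprema
  have hbdd1 : BddAbove ((fun p : ℝ × ℝ => p.1 ^ 2 + p.2 ^ 2) '' (Icc a₁ b₁ ×ˢ Icc a₂ b₂)) :=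
    ((isCompact_Icc.prod isCompact_Icc).image
      (((continuous_fst.pow 2).add (continuous_snd.pow 2)))).bddAbove
  have hle1 : ∀ x ∈ Icc a₁ b₁, ∀ y ∈ Icc a₂ b₂, x ^ 2 + y ^ 2 ≤ R₁ := by
    intro x hx y hy
    rw [hR₁]
    exact le_csSup hbdd1 ⟨(x, y), ⟨hx, hy⟩, rfl⟩
  have hR1pos : 0 < R₁ := by
    have hk1 : b₁ ^ 2 + b₂ ^ 2 ≤ R₁ := hle1 b₁ hmb1 b₂ hmb2
    have hk2 : a₁ ^ 2 + b₂ ^ 2 ≤ R₁ := hle1 a₁ hma1 b₂ hmb2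
    nlinarith [sq_nonneg b₂, sq_nonneg (a₁ + b₁), mul_pos (sub_pos.2 h₁) (sub_pos.2 h₁)]
  have hEcomp : IsCompact ((({a₁, b₁} : Set ℝ) ×ˢ Icc a₂ b₂)
      ∪ (Icc a₁ b₁ ×ˢ ({a₂, b₂} : Set ℝ))) :=
    (((Set.finite_singleton b₁).insert a₁).isCompact.prod isCompact_Icc).union
      (isCompact_Icc.prod ((Set.finite_singleton b₂).insert a₂).isCompact)
  have hbdd2 : BddAbove ((fun p : ℝ × ℝ => Real.sqrt (p.1 ^ 2 + p.2 ^ 2)) ''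
      ((({a₁, b₁} : Set ℝ) ×ˢ Icc a₂ b₂) ∪ (Icc a₁ b₁ ×ˢ ({a₂, b₂} : Set ℝ)))) :=
    (hEcomp.image
      (Real.continuous_sqrt.comp ((continuous_fst.pow 2).add (continuous_snd.pow 2)))).bddAbove
  have hle2 : ∀ x y : ℝ, ((x, y) : ℝ × ℝ) ∈ ((({a₁, b₁} : Set ℝ) ×ˢ Icc a₂ b₂)
      ∪ (Icc a₁ b₁ ×ˢ ({a₂, b₂} : Set ℝ))) → |x| ≤ R₂ ∧ |y| ≤ R₂ := by
    intro x y hp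
    have h : Real.sqrt (x ^ 2 + y ^ 2) ≤ R₂ := by
      rw [hR₂]
      exact le_csSup hbdd2 ⟨(x, y), hp, rfl⟩
    constructor
    · calc |x| = Real.sqrt (x ^ 2) := (Real.sqrt_sq_eq_abs x).symm
        _ ≤ Real.sqrt (x ^ 2 + y ^ 2) := Real.sqrt_le_sqrt (by nlinarith [sq_nonneg y])
        _ ≤ R₂ := h
    · calc |y| = Real.sqrt (y ^ 2) := (Real.sqrt_sq_eq_abs y).symm
        _ ≤ Real.sqrt (x ^ 2 + y ^ 2) := Real.sqrt_le_sqrt (by nlinarith [sq_nonneg x])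
        _ ≤ R₂ := h
  have eb₁ : b₁ ≤ R₂ :=
    le_trans (le_abs_self b₁) (hle2 b₁ a₂ (Or.inl ⟨by simp, hma2⟩)).1
  have ea₁ : -a₁ ≤ R₂ :=
    le_trans (neg_le_abs a₁) (hle2 a₁ a₂ (Or.inl ⟨by simp, hma2⟩)).1
  have eb₂ : b₂ ≤ R₂ :=
    le_trans (le_abs_self b₂) (hle2 a₁ b₂ (Or.inl ⟨by simp, hmb2⟩)).2
  have ea₂ : -a₂ ≤ R₂ :=
    le_trans (neg_le_abs a₂) (hle2 a₁ a₂ (Or.inl ⟨by simp, hma2⟩)).2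
  have hR2nn : 0 ≤ R₂ := by linarith
  -- rewrite the goal in terms of the clamped functions
  have gL : (∫ x in a₁..b₁, ∫ y in a₂..b₂,
        u x y * (deriv (fun s => deriv (fun s' => u s' y) s) x
               + deriv (fun s => deriv (fun s' => u x s') s) y))
      = ∫ x in a₁..b₁, ∫ y in a₂..b₂, F x y * (F11 x y + F22 x y) := by
    apply intervalIntegral.integral_congr
    intro x hx
    rw [uIcc_of_le hab] at hx
    apply intervalIntegral.integral_congr
    intro y hy
    rw [uIcc_of_le hcd] at hy
    have hpU : ((x, y) : ℝ × ℝ) ∈ U := hKU ⟨hx, hy⟩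
    simp only
    rw [hder2x x y hpU, hder2y x y hpU]
    simp only [hFdef, hF11def, hF22def, id₁ x hx, id₂ y hy, hfdef]
  have gP : (∫ x in a₁..b₁, ∫ y in a₂..b₂, (u x y) ^ 2)
      = ∫ x in a₁..b₁, ∫ y in a₂..b₂, F x y ^ 2 := by
    apply intervalIntegral.integral_congr
    intro x hx
    rw [uIcc_of_le hab] at hx
    apply intervalIntegral.integral_congr
    intro y hy
    rw [uIcc_of_le hcd] at hy
    simp only [hFdef, id₁ x hx, id₂ y hy, hfdef]
  have gBint : bInt a₁ b₁ a₂ b₂ (fun x y => (u x y) ^ 2)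
      = (∫ y in a₂..b₂, F a₁ y ^ 2) + (∫ y in a₂..b₂, F b₁ y ^ 2)
        + (∫ x in a₁..b₁, F x a₂ ^ 2) + (∫ x in a₁..b₁, F x b₂ ^ 2) := by
    have e1 : (∫ y in a₂..b₂, (u a₁ y) ^ 2) = ∫ y in a₂..b₂, F a₁ y ^ 2 := by
      apply intervalIntegral.integral_congr
      intro y hy
      rw [uIcc_of_le hcd] at hy
      simp only [hFdef, id₁ a₁ hma1, id₂ y hy, hfdef]
    have e2 : (∫ y in a₂..b₂, (u b₁ y) ^ 2) = ∫ y in a₂..b₂, F b₁ y ^ 2 := by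
      apply intervalIntegral.integral_congr
      intro y hy
      rw [uIcc_of_le hcd] at hy
      simp only [hFdef, id₁ b₁ hmb1, id₂ y hy, hfdef]
    have e3 : (∫ x in a₁..b₁, (u x a₂) ^ 2) = ∫ x in a₁..b₁, F x a₂ ^ 2 := by
      apply intervalIntegral.integral_congr
      intro x hx
      rw [uIcc_of_le hab] at hx
      simp only [hFdef, id₁ x hx, id₂ a₂ hma2, hfdef]
    have e4 : (∫ x in a₁..b₁, (u x b₂) ^ 2) = ∫ x in a₁..b₁, F x b₂ ^ 2 := by
      apply intervalIntegral.integral_congr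
      intro x hx
      rw [uIcc_of_le hab] at hx
      simp only [hFdef, id₁ x hx, id₂ b₂ hmb2, hfdef]
    simp only [bInt]
    rw [e1, e2, e3, e4]
  have gB1 : (∫ y in a₂..b₂, deriv (fun s => u s y) b₁ * u b₁ y)
      = ∫ y in a₂..b₂, F1 b₁ y * F b₁ y := by
    apply intervalIntegral.integral_congr
    intro y hy
    rw [uIcc_of_le hcd] at hy
    have hpU : ((b₁, y) : ℝ × ℝ) ∈ U := hKU ⟨hmb1, hy⟩
    simp only
    rw [(hd1 b₁ y hpU).deriv]
    simp only [hF1def, hFdef, id₁ b₁ hmb1, id₂ y hy, hfdef]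
  have gB2 : (∫ y in a₂..b₂, deriv (fun s => u s y) a₁ * u a₁ y)
      = ∫ y in a₂..b₂, F1 a₁ y * F a₁ y := by
    apply intervalIntegral.integral_congr
    intro y hy
    rw [uIcc_of_le hcd] at hy
    have hpU : ((a₁, y) : ℝ × ℝ) ∈ U := hKU ⟨hma1, hy⟩
    simp only
    rw [(hd1 a₁ y hpU).deriv]
    simp only [hF1def, hFdef, id₁ a₁ hma1, id₂ y hy, hfdef]
  have gB3 : (∫ x in a₁..b₁, deriv (fun s => u x s) b₂ * u x b₂)
      = ∫ x in a₁..b₁, F2 x b₂ * F x b₂ := by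
    apply intervalIntegral.integral_congr
    intro x hx
    rw [uIcc_of_le hab] at hx
    have hpU : ((x, b₂) : ℝ × ℝ) ∈ U := hKU ⟨hx, hmb2⟩
    simp only
    rw [(hd2 x b₂ hpU).deriv]
    simp only [hF2def, hFdef, id₁ x hx, id₂ b₂ hmb2, hfdef]
  have gB4 : (∫ x in a₁..b₁, deriv (fun s => u x s) a₂ * u x a₂)
      = ∫ x in a₁..b₁, F2 x a₂ * F x a₂ := by
    apply intervalIntegral.integral_congr
    intro x hx
    rw [uIcc_of_le hab] at hx
    have hpU : ((x, a₂) : ℝ × ℝ) ∈ U := hKU ⟨hx, hma2⟩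
    simp only
    rw [(hd2 x a₂ hpU).deriv]
    simp only [hF2def, hFdef, id₁ x hx, id₂ a₂ hma2, hfdef]
  rw [gL, gP, gBint, gB1, gB2, gB3, gB4]
  exact auxMain a₁ b₁ a₂ b₂ hab hcd F F1 F2 F11 F22 cF cF1 cF2 cF11 cF22 hA hB hC hD
    R₁ R₂ hR1pos hR2nn hle1 eb₁ ea₁ eb₂ ea₂
end

section
/- Let u : ℝ² → ℝ and v = (v₁,v₂) : ℝ² → ℝ² be continuously differentiable on an open neighborhood of W, and let 𝒱 ≥ 0 satisfy |∇·v(x)| ≤ 𝒱 for all x ∈ W. Then −∫_W u·(v·∇u) dx ≤ −½·∫_{∂W} u²·(v·n) dσ + (𝒱/2)·∫_W u² dx. -/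
open Set MeasureTheory intervalIntegral

lemma aux_fub {a₁ b₁ a₂ b₂ : ℝ} (h₁ : a₁ ≤ b₁) (h₂ : a₂ ≤ b₂) {h : ℝ → ℝ → ℝ}
    (hc : ContinuousOn (fun p : ℝ × ℝ => h p.1 p.2) (Icc a₁ b₁ ×ˢ Icc a₂ b₂)) :
    IntervalIntegrable (fun x => ∫ y in a₂..b₂, h x y) volume a₁ b₁ := by
  have hK : IsCompact (Icc a₁ b₁ ×ˢ Icc a₂ b₂) := isCompact_Icc.prod isCompact_Icc
  have hint : IntegrableOn (fun p : ℝ × ℝ => h p.1 p.2) (Icc a₁ b₁ ×ˢ Icc a₂ b₂) :=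
    hc.integrableOn_compact hK
  have hint2 : Integrable (fun p : ℝ × ℝ => h p.1 p.2)
      ((volume.restrict (Ioc a₁ b₁)).prod (volume.restrict (Ioc a₂ b₂))) := by
    rw [Measure.prod_restrict]
    exact hint.mono_set (prod_mono Ioc_subset_Icc_self Ioc_subset_Icc_self)
  have h3 := hint2.integral_prod_left
  rw [intervalIntegrable_iff_integrableOn_Ioc_of_le h₁]
  refine h3.congr ?_
  filter_upwards with x
  rw [intervalIntegral.integral_of_le h₂]

lemma aux_inner {a₁ b₁ a₂ b₂ : ℝ} (h₂ : a₂ ≤ b₂) {x : ℝ} (hx : x ∈ Icc a₁ b₁) {h : ℝ → ℝ → ℝ}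
    (hc : ContinuousOn (fun p : ℝ × ℝ => h p.1 p.2) (Icc a₁ b₁ ×ˢ Icc a₂ b₂)) :
    IntervalIntegrable (fun y => h x y) volume a₂ b₂ := by
  have hcy : ContinuousOn (fun y => h x y) (Icc a₂ b₂) :=
    hc.comp ((Continuous.prodMk_right x).continuousOn) (fun y hy => mk_mem_prod hx hy)
  rw [← uIcc_of_le h₂] at hcy
  exact hcy.intervalIntegrable

lemma aux_px {f : ℝ → ℝ → ℝ} {x y : ℝ}
    (hf : DifferentiableAt ℝ (fun p : ℝ × ℝ => f p.1 p.2) (x, y)) :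
    HasDerivAt (fun s => f s y) (fderiv ℝ (fun p : ℝ × ℝ => f p.1 p.2) (x, y) (1, 0)) x :=
  by have := hf.hasFDerivAt.comp_hasDerivAt x ((hasDerivAt_id' x).prodMk (hasDerivAt_const x y)); exact this

lemma aux_py {f : ℝ → ℝ → ℝ} {x y : ℝ}
    (hf : DifferentiableAt ℝ (fun p : ℝ × ℝ => f p.1 p.2) (x, y)) :
    HasDerivAt (fun t => f x t) (fderiv ℝ (fun p : ℝ × ℝ => f p.1 p.2) (x, y) (0, 1)) y :=
  hf.hasFDerivAt.comp_hasDerivAt y ((hasDerivAt_const y x).prodMk (hasDerivAt_id y))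

lemma aux_Fx {u v : ℝ → ℝ → ℝ} {x y : ℝ}
    (hu : DifferentiableAt ℝ (fun p : ℝ × ℝ => u p.1 p.2) (x, y))
    (hv : DifferentiableAt ℝ (fun p : ℝ × ℝ => v p.1 p.2) (x, y)) :
    fderiv ℝ (fun p : ℝ × ℝ => (u p.1 p.2) ^ 2 * v p.1 p.2) (x, y) (1, 0)
      = 2 * u x y * deriv (fun s => u s y) x * v x y
        + (u x y) ^ 2 * deriv (fun s => v s y) x := by
  have hF : DifferentiableAt ℝ (fun p : ℝ × ℝ => (u p.1 p.2) ^ 2 * v p.1 p.2) (x, y) :=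
    (hu.pow 2).mul hv
  have h1 := aux_px hu
  have h2 := aux_px hv
  have hF1 := aux_px (f := fun a b => (u a b) ^ 2 * v a b) hF
  have h1' : HasDerivAt (fun s => u s y) (deriv (fun s => u s y) x) x := h1.deriv ▸ h1
  have h2' : HasDerivAt (fun s => v s y) (deriv (fun s => v s y) x) x := h2.deriv ▸ h2
  have hF2 := (h1'.pow 2).mul h2'
  have := hF1.unique hF2
  rw [this]; push_cast; simp only [Pi.pow_apply]; ring

lemma aux_Gy {u v : ℝ → ℝ → ℝ} {x y : ℝ}
    (hu : DifferentiableAt ℝ (fun p : ℝ × ℝ => u p.1 p.2) (x, y))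
    (hv : DifferentiableAt ℝ (fun p : ℝ × ℝ => v p.1 p.2) (x, y)) :
    fderiv ℝ (fun p : ℝ × ℝ => (u p.1 p.2) ^ 2 * v p.1 p.2) (x, y) (0, 1)
      = 2 * u x y * deriv (fun t => u x t) y * v x y
        + (u x y) ^ 2 * deriv (fun t => v x t) y := by
  have hF : DifferentiableAt ℝ (fun p : ℝ × ℝ => (u p.1 p.2) ^ 2 * v p.1 p.2) (x, y) :=
    (hu.pow 2).mul hv
  have h1 := aux_py hu
  have h2 := aux_py hv
  have hF1 := aux_py (f := fun a b => (u a b) ^ 2 * v a b) hF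
  have h1' : HasDerivAt (fun t => u x t) (deriv (fun t => u x t) y) y := h1.deriv ▸ h1
  have h2' : HasDerivAt (fun t => v x t) (deriv (fun t => v x t) y) y := h2.deriv ▸ h2
  have hF2 := (h1'.pow 2).mul h2'
  have := hF1.unique hF2
  rw [this]; push_cast; simp only [Pi.pow_apply]; ring

lemma aux_contx {U : Set (ℝ × ℝ)} (hUo : IsOpen U) {f : ℝ → ℝ → ℝ}
    (hf : ContDiffOn ℝ 1 (fun p : ℝ × ℝ => f p.1 p.2) U) :
    ContinuousOn (fun p : ℝ × ℝ => deriv (fun s => f s p.2) p.1) U := by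
  have hc : ContinuousOn (fun p : ℝ × ℝ =>
      fderiv ℝ (fun q : ℝ × ℝ => f q.1 q.2) p (1, 0)) U :=
    (hf.continuousOn_fderiv_of_isOpen hUo le_rfl).clm_apply continuousOn_const
  refine hc.congr fun p hp => ?_
  obtain ⟨x, y⟩ := p
  have hd : DifferentiableAt ℝ (fun q : ℝ × ℝ => f q.1 q.2) (x, y) :=
    (hf.differentiableOn one_ne_zero).differentiableAt (hUo.mem_nhds hp)
  exact (aux_px hd).deriv

lemma aux_conty {U : Set (ℝ × ℝ)} (hUo : IsOpen U) {f : ℝ → ℝ → ℝ}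
    (hf : ContDiffOn ℝ 1 (fun p : ℝ × ℝ => f p.1 p.2) U) :
    ContinuousOn (fun p : ℝ × ℝ => deriv (fun t => f p.1 t) p.2) U := by
  have hc : ContinuousOn (fun p : ℝ × ℝ =>
      fderiv ℝ (fun q : ℝ × ℝ => f q.1 q.2) p (0, 1)) U :=
    (hf.continuousOn_fderiv_of_isOpen hUo le_rfl).clm_apply continuousOn_const
  refine hc.congr fun p hp => ?_
  obtain ⟨x, y⟩ := p
  have hd : DifferentiableAt ℝ (fun q : ℝ × ℝ => f q.1 q.2) (x, y) :=
    (hf.differentiableOn one_ne_zero).differentiableAt (hUo.mem_nhds hp)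
  exact (aux_py hd).deriv

/-- Lemma 2 of the paper (advection-term estimate) on the rectangle `W = [a₁,b₁]×[a₂,b₂]`:
if `|∇·v| ≤ 𝒱` on `W`, then
`−∫_W u·(v·∇u) ≤ −½·∫_{∂W} u²·(v·n) dσ + (𝒱/2)·∫_W u²`, with the boundary term
written out edge by edge. -/
theorem stmt7 (a₁ b₁ a₂ b₂ : ℝ) (h₁ : a₁ < b₁) (h₂ : a₂ < b₂)
    (u v₁ v₂ : ℝ → ℝ → ℝ)
    (hu : ∃ U : Set (ℝ × ℝ), IsOpen U ∧ (Icc a₁ b₁ ×ˢ Icc a₂ b₂) ⊆ U ∧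
      ContDiffOn ℝ 1 (fun p : ℝ × ℝ => u p.1 p.2) U ∧
      ContDiffOn ℝ 1 (fun p : ℝ × ℝ => v₁ p.1 p.2) U ∧
      ContDiffOn ℝ 1 (fun p : ℝ × ℝ => v₂ p.1 p.2) U)
    (V : ℝ) (hV : 0 ≤ V)
    (hdiv : ∀ x ∈ Icc a₁ b₁, ∀ y ∈ Icc a₂ b₂,
      |deriv (fun s => v₁ s y) x + deriv (fun s => v₂ x s) y| ≤ V) :
    -(∫ x in a₁..b₁, ∫ y in a₂..b₂,
        u x y * (v₁ x y * deriv (fun s => u s y) x + v₂ x y * deriv (fun s => u x s) y))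
    ≤ -(1 / 2) * ((∫ y in a₂..b₂, (u b₁ y) ^ 2 * v₁ b₁ y)
        - (∫ y in a₂..b₂, (u a₁ y) ^ 2 * v₁ a₁ y)
        + (∫ x in a₁..b₁, (u x b₂) ^ 2 * v₂ x b₂)
        - (∫ x in a₁..b₁, (u x a₂) ^ 2 * v₂ x a₂))
      + (V / 2) * ∫ x in a₁..b₁, ∫ y in a₂..b₂, (u x y) ^ 2 := by
  obtain ⟨U, hUo, hKU, hcu, hcv1, hcv2⟩ := hu
  have h₁' := h₁.le
  have h₂' := h₂.le
  -- continuity basics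
  have cu : ContinuousOn (fun p : ℝ × ℝ => u p.1 p.2) U := hcu.continuousOn
  have cv1 : ContinuousOn (fun p : ℝ × ℝ => v₁ p.1 p.2) U := hcv1.continuousOn
  have cv2 : ContinuousOn (fun p : ℝ × ℝ => v₂ p.1 p.2) U := hcv2.continuousOn
  -- smoothness of F and G
  have hcF : ContDiffOn ℝ 1 (fun p : ℝ × ℝ => (u p.1 p.2) ^ 2 * v₁ p.1 p.2) U :=
    (hcu.pow 2).mul hcv1
  have hcG : ContDiffOn ℝ 1 (fun p : ℝ × ℝ => (u p.1 p.2) ^ 2 * v₂ p.1 p.2) U :=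
    (hcu.pow 2).mul hcv2
  have hsub : uIcc a₁ b₁ ×ˢ uIcc a₂ b₂ ⊆ U := by
    rw [uIcc_of_le h₁', uIcc_of_le h₂']; exact hKU
  have hIoosub : Ioo (min a₁ b₁) (max a₁ b₁) ×ˢ Ioo (min a₂ b₂) (max a₂ b₂) ⊆ U := by
    rw [min_eq_left h₁', max_eq_right h₁', min_eq_left h₂', max_eq_right h₂']
    exact (prod_mono Ioo_subset_Icc_self Ioo_subset_Icc_self).trans hKU
  -- integrability for the divergence theorem
  have HiC : ContinuousOn (fun p : ℝ × ℝ =>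
      fderiv ℝ (fun q : ℝ × ℝ => (u q.1 q.2) ^ 2 * v₁ q.1 q.2) p (1, 0)
      + fderiv ℝ (fun q : ℝ × ℝ => (u q.1 q.2) ^ 2 * v₂ q.1 q.2) p (0, 1)) U :=
    ((hcF.continuousOn_fderiv_of_isOpen hUo le_rfl).clm_apply continuousOn_const).add
      ((hcG.continuousOn_fderiv_of_isOpen hUo le_rfl).clm_apply continuousOn_const)
  have Hi : IntegrableOn (fun p : ℝ × ℝ =>
      fderiv ℝ (fun q : ℝ × ℝ => (u q.1 q.2) ^ 2 * v₁ q.1 q.2) p (1, 0)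
      + fderiv ℝ (fun q : ℝ × ℝ => (u q.1 q.2) ^ 2 * v₂ q.1 q.2) p (0, 1))
      (uIcc a₁ b₁ ×ˢ uIcc a₂ b₂) :=
    (HiC.mono hsub).integrableOn_compact (isCompact_uIcc.prod isCompact_uIcc)
  -- divergence theorem
  have hdiv2 := MeasureTheory.integral2_divergence_prod_of_hasFDerivAt_off_countable
    (fun p : ℝ × ℝ => (u p.1 p.2) ^ 2 * v₁ p.1 p.2)
    (fun p : ℝ × ℝ => (u p.1 p.2) ^ 2 * v₂ p.1 p.2)
    (fun p => fderiv ℝ (fun q : ℝ × ℝ => (u q.1 q.2) ^ 2 * v₁ q.1 q.2) p)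
    (fun p => fderiv ℝ (fun q : ℝ × ℝ => (u q.1 q.2) ^ 2 * v₂ q.1 q.2) p)
    a₁ a₂ b₁ b₂ ∅ countable_empty
    (hcF.continuousOn.mono hsub) (hcG.continuousOn.mono hsub)
    (fun p hp => ((hcF.differentiableOn one_ne_zero).differentiableAt
      (hUo.mem_nhds (hIoosub hp.1))).hasFDerivAt)
    (fun p hp => ((hcG.differentiableOn one_ne_zero).differentiableAt
      (hUo.mem_nhds (hIoosub hp.1))).hasFDerivAt)
    Hi

  -- restate the divergence identity with beta/proj reduced
  have hB : (∫ x in a₁..b₁, ∫ y in a₂..b₂,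
      fderiv ℝ (fun q : ℝ × ℝ => (u q.1 q.2) ^ 2 * v₁ q.1 q.2) (x, y) (1, 0)
      + fderiv ℝ (fun q : ℝ × ℝ => (u q.1 q.2) ^ 2 * v₂ q.1 q.2) (x, y) (0, 1))
      = ((∫ x in a₁..b₁, (u x b₂) ^ 2 * v₂ x b₂) - (∫ x in a₁..b₁, (u x a₂) ^ 2 * v₂ x a₂)
        + ∫ y in a₂..b₂, (u b₁ y) ^ 2 * v₁ b₁ y) - ∫ y in a₂..b₂, (u a₁ y) ^ 2 * v₁ a₁ y :=
    hdiv2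
  clear hdiv2
  -- differentiability at points of U
  have hdu : ∀ p ∈ U, DifferentiableAt ℝ (fun q : ℝ × ℝ => u q.1 q.2) p :=
    fun p hp => (hcu.differentiableOn one_ne_zero).differentiableAt (hUo.mem_nhds hp)
  have hdv1 : ∀ p ∈ U, DifferentiableAt ℝ (fun q : ℝ × ℝ => v₁ q.1 q.2) p :=
    fun p hp => (hcv1.differentiableOn one_ne_zero).differentiableAt (hUo.mem_nhds hp)
  have hdv2 : ∀ p ∈ U, DifferentiableAt ℝ (fun q : ℝ × ℝ => v₂ q.1 q.2) p :=
    fun p hp => (hcv2.differentiableOn one_ne_zero).differentiableAt (hUo.mem_nhds hp)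
  -- pointwise identity on the rectangle
  have hpt : ∀ x ∈ Icc a₁ b₁, ∀ y ∈ Icc a₂ b₂,
      fderiv ℝ (fun q : ℝ × ℝ => (u q.1 q.2) ^ 2 * v₁ q.1 q.2) (x, y) (1, 0)
      + fderiv ℝ (fun q : ℝ × ℝ => (u q.1 q.2) ^ 2 * v₂ q.1 q.2) (x, y) (0, 1)
      = 2 * (u x y * (v₁ x y * deriv (fun s => u s y) x + v₂ x y * deriv (fun s => u x s) y))
        + (u x y) ^ 2 * (deriv (fun s => v₁ s y) x + deriv (fun s => v₂ x s) y) := by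
    intro x hx y hy
    have hp : (x, y) ∈ U := hKU (mk_mem_prod hx hy)
    rw [aux_Fx (hdu _ hp) (hdv1 _ hp), aux_Gy (hdu _ hp) (hdv2 _ hp)]
    ring
  -- continuity of the relevant integrands on the rectangle
  have contI : ContinuousOn (fun p : ℝ × ℝ => u p.1 p.2 *
      (v₁ p.1 p.2 * deriv (fun s => u s p.2) p.1 + v₂ p.1 p.2 * deriv (fun s => u p.1 s) p.2))
      (Icc a₁ b₁ ×ˢ Icc a₂ b₂) :=
    (cu.mul ((cv1.mul (aux_contx hUo hcu)).add (cv2.mul (aux_conty hUo hcu)))).mono hKU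
  have contQ : ContinuousOn (fun p : ℝ × ℝ => (u p.1 p.2) ^ 2 *
      (deriv (fun s => v₁ s p.2) p.1 + deriv (fun s => v₂ p.1 s) p.2))
      (Icc a₁ b₁ ×ˢ Icc a₂ b₂) :=
    ((cu.pow 2).mul ((aux_contx hUo hcv1).add (aux_conty hUo hcv2))).mono hKU
  have contVu : ContinuousOn (fun p : ℝ × ℝ => V * (u p.1 p.2) ^ 2)
      (Icc a₁ b₁ ×ˢ Icc a₂ b₂) := (continuousOn_const.mul (cu.pow 2)).mono hKU
  have contu2 : ContinuousOn (fun p : ℝ × ℝ => (u p.1 p.2) ^ 2)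
      (Icc a₁ b₁ ×ˢ Icc a₂ b₂) := (cu.pow 2).mono hKU
  -- split the double integral
  have hsplit : (∫ x in a₁..b₁, ∫ y in a₂..b₂,
      fderiv ℝ (fun q : ℝ × ℝ => (u q.1 q.2) ^ 2 * v₁ q.1 q.2) (x, y) (1, 0)
      + fderiv ℝ (fun q : ℝ × ℝ => (u q.1 q.2) ^ 2 * v₂ q.1 q.2) (x, y) (0, 1))
      = 2 * (∫ x in a₁..b₁, ∫ y in a₂..b₂,
          u x y * (v₁ x y * deriv (fun s => u s y) x + v₂ x y * deriv (fun s => u x s) y))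
        + ∫ x in a₁..b₁, ∫ y in a₂..b₂,
          (u x y) ^ 2 * (deriv (fun s => v₁ s y) x + deriv (fun s => v₂ x s) y) := by
    rw [← intervalIntegral.integral_const_mul,
      ← intervalIntegral.integral_add
        ((aux_fub h₁' h₂'
          (h := fun a b => u a b * (v₁ a b * deriv (fun s => u s b) a
            + v₂ a b * deriv (fun s => u a s) b)) contI).const_mul 2)
        (aux_fub h₁' h₂'
          (h := fun a b => (u a b) ^ 2 * (deriv (fun s => v₁ s b) a
            + deriv (fun s => v₂ a s) b)) contQ)]
    refine intervalIntegral.integral_congr fun x hx => ?_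
    rw [uIcc_of_le h₁'] at hx
    rw [← intervalIntegral.integral_const_mul,
      ← intervalIntegral.integral_add
        ((aux_inner h₂' hx
          (h := fun a b => u a b * (v₁ a b * deriv (fun s => u s b) a
            + v₂ a b * deriv (fun s => u a s) b)) contI).const_mul 2)
        (aux_inner h₂' hx
          (h := fun a b => (u a b) ^ 2 * (deriv (fun s => v₁ s b) a
            + deriv (fun s => v₂ a s) b)) contQ)]
    refine intervalIntegral.integral_congr fun y hy => ?_
    rw [uIcc_of_le h₂'] at hy
    exact hpt x hx y hy
  -- bound the divergence remainder term
  have hmono : (∫ x in a₁..b₁, ∫ y in a₂..b₂,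
      (u x y) ^ 2 * (deriv (fun s => v₁ s y) x + deriv (fun s => v₂ x s) y))
      ≤ ∫ x in a₁..b₁, ∫ y in a₂..b₂, V * (u x y) ^ 2 := by
    refine intervalIntegral.integral_mono_on h₁'
      (aux_fub h₁' h₂'
        (h := fun a b => (u a b) ^ 2 * (deriv (fun s => v₁ s b) a
          + deriv (fun s => v₂ a s) b)) contQ)
      (aux_fub h₁' h₂' (h := fun a b => V * (u a b) ^ 2) contVu)
      fun x hx => ?_
    refine intervalIntegral.integral_mono_on h₂'
      (aux_inner h₂' hx
        (h := fun a b => (u a b) ^ 2 * (deriv (fun s => v₁ s b) a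
          + deriv (fun s => v₂ a s) b)) contQ)
      (aux_inner h₂' hx (h := fun a b => V * (u a b) ^ 2) contVu)
      fun y hy => ?_
    have hd := hdiv x hx y hy
    have h0 := sq_nonneg (u x y)
    nlinarith [le_abs_self (deriv (fun s => v₁ s y) x + deriv (fun s => v₂ x s) y)]
  have hVeq : (∫ x in a₁..b₁, ∫ y in a₂..b₂, V * (u x y) ^ 2)
      = V * ∫ x in a₁..b₁, ∫ y in a₂..b₂, (u x y) ^ 2 := by
    rw [← intervalIntegral.integral_const_mul]
    exact intervalIntegral.integral_congr fun x hx =>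
      intervalIntegral.integral_const_mul V _
  rw [hsplit] at hB
  rw [hVeq] at hmono
  linarith
end
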